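/- Let n be even, a, k ∈ ℝ^n, and 1 ≤ m ≤ n/2 − 1. Then for every x in the positive orthant (0,∞)^n, {F_m, H}(x) = I_m(x) Σ_{j=1}^{2m} k_j (v_j(x) + v_{j−1}(x) − v_{2m}(x)), where the bracket is the log-canonical Poisson bracket. -/

import Mathlib

/-- Partial derivative `∂f/∂x_i` of a function on `ℝⁿ`. -/
noncomputable def pd {n : ℕ} (f : (Fin n → ℝ) → ℝ) (x : Fin n → ℝ) (i : Fin n) : ℝ :=
  fderiv ℝ f x (Pi.single i 1)

/-- The log-canonical Poisson bracket
`{f,g}(x) = Σ_{i<j} x_i x_j (∂f/∂x_i ∂g/∂x_j − ∂f/∂x_j ∂g/∂x_i)`. -/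
noncomputable def pb {n : ℕ} (f g : (Fin n → ℝ) → ℝ) (x : Fin n → ℝ) : ℝ :=
  ∑ i : Fin n, ∑ j : Fin n,
    if i < j then x i * x j * (pd f x i * pd g x j - pd f x j * pd g x i) else 0

/-- `J_m(x) = (x_1 x_3 ⋯ x_{2m−1})/(x_2 x_4 ⋯ x_{2m})` (1-based; here indices are 0-based,
so the numerator ranges over even indices `< 2m` and the denominator over odd indices `< 2m`). -/
noncomputable def Jfun {n : ℕ} (m : ℕ) (x : Fin n → ℝ) : ℝ :=
  (∏ i ∈ Finset.univ.filter (fun i : Fin n => i.val < 2*m ∧ Even i.val), x i) /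
  (∏ i ∈ Finset.univ.filter (fun i : Fin n => i.val < 2*m ∧ Odd i.val), x i)

/-- `I_m(x) = (x_{2m+2} x_{2m+4} ⋯ x_n)/(x_{2m+1} x_{2m+3} ⋯ x_{n−1})` (1-based; here 0-based:
numerator over odd indices `≥ 2m`, denominator over even indices `≥ 2m`). -/
noncomputable def Ifun {n : ℕ} (m : ℕ) (x : Fin n → ℝ) : ℝ :=
  (∏ i ∈ Finset.univ.filter (fun i : Fin n => 2*m ≤ i.val ∧ Odd i.val), x i) /
  (∏ i ∈ Finset.univ.filter (fun i : Fin n => 2*m ≤ i.val ∧ Even i.val), x i)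

/-- `v_m(x) = a_1 x_1 + ⋯ + a_m x_m` (sum of the first `m` coordinates, 0-based indices `< m`). -/
def vfun {n : ℕ} (a : Fin n → ℝ) (m : ℕ) (x : Fin n → ℝ) : ℝ :=
  ∑ j ∈ Finset.univ.filter (fun j : Fin n => j.val < m), a j * x j

/-- `F_m = v_{2m} I_m`. -/
noncomputable def Ffun {n : ℕ} (a : Fin n → ℝ) (m : ℕ) (x : Fin n → ℝ) : ℝ :=
  vfun a (2*m) x * Ifun m x

/-- The Hamiltonian `H(x) = Σ_i (a_i x_i + k_i log x_i)`. -/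
noncomputable def Hfun {n : ℕ} (a k : Fin n → ℝ) (x : Fin n → ℝ) : ℝ :=
  ∑ i, (a i * x i + k i * Real.log (x i))

/-! ### Auxiliary arithmetic lemmas on `ℕ`-indexed sums -/

noncomputable def epsR (m i : ℕ) : ℝ := if 2*m ≤ i then (if i % 2 = 1 then 1 else -1) else 0

def Vv (B : ℕ → ℝ) (r : ℕ) : ℝ := ∑ i ∈ Finset.range r, B i

lemma sum_ite_lt (n j : ℕ) (hj : j ≤ n) (g : ℕ → ℝ) :
    ∑ i ∈ Finset.range n, (if i < j then g i else 0) = ∑ i ∈ Finset.range j, g i := by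
  rw [← Finset.sum_filter]
  congr 1
  ext i
  simp only [Finset.mem_filter, Finset.mem_range]
  omega

lemma eps_sum (m j : ℕ) : ∑ i ∈ Finset.range j, epsR m i
    = if 2*m ≤ j ∧ j % 2 = 1 then (-1:ℝ) else 0 := by
  induction j with
  | zero => simp
  | succ j ih =>
    rw [Finset.sum_range_succ, ih, epsR]
    rcases Nat.lt_or_ge j (2*m) with h | h
    · rcases Nat.eq_or_lt_of_le (Nat.succ_le_of_lt h) with h2 | h2
      · have hj1 : j + 1 = 2*m := h2.symm ▸ rfl
        simp only [if_neg (by omega : ¬ 2*m ≤ j), if_neg (by omega : ¬ (2*m ≤ j ∧ j % 2 = 1))]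
        rw [if_neg (by omega : ¬ (2*m ≤ j+1 ∧ (j+1) % 2 = 1))]
        ring
      · simp only [if_neg (by omega : ¬ 2*m ≤ j), if_neg (by omega : ¬ (2*m ≤ j ∧ j % 2 = 1)),
          if_neg (by omega : ¬ (2*m ≤ j+1 ∧ (j+1) % 2 = 1))]
        ring
    · rcases Nat.even_or_odd j with he | ho
      · have hj2 : j % 2 = 0 := Nat.even_iff.mp he
        rw [if_neg (by omega : ¬ (2*m ≤ j ∧ j % 2 = 1)), if_pos h, if_neg (by omega)]
        rw [if_pos (by omega : 2*m ≤ j+1 ∧ (j+1) % 2 = 1)]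
        ring
      · have hj2 : j % 2 = 1 := Nat.odd_iff.mp ho
        rw [if_pos (by omega : 2*m ≤ j ∧ j % 2 = 1), if_pos h, if_pos hj2,
          if_neg (by omega : ¬ (2*m ≤ j+1 ∧ (j+1) % 2 = 1))]
        ring

lemma cancel_pairs (q : ℕ) (g : ℕ → ℝ) (h : ∀ i, g (2*i) + g (2*i+1) = 0) :
    ∑ j ∈ Finset.range (2*q), g j = 0 := by
  induction q with
  | zero => simp
  | succ q ih =>
    have : 2*(q+1) = (2*q + 1) + 1 := by ring
    rw [this, Finset.sum_range_succ, Finset.sum_range_succ, ih]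
    linarith [h q]

lemma abel (r : ℕ) (B K : ℕ → ℝ) :
    ∑ j ∈ Finset.range r, B j * (∑ i ∈ Finset.range j, K i)
      = ∑ j ∈ Finset.range r, K j * (Vv B r - Vv B (j+1)) := by
  induction r with
  | zero => simp
  | succ r ih =>
    rw [Finset.sum_range_succ, ih, Finset.sum_range_succ]
    have hV : Vv B (r+1) = Vv B r + B r := Finset.sum_range_succ B r
    rw [hV]
    have : ∑ j ∈ Finset.range r, K j * (Vv B r + B r - Vv B (j+1))
        = (∑ j ∈ Finset.range r, K j * (Vv B r - Vv B (j+1)))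
          + (∑ j ∈ Finset.range r, K j) * B r := by
      rw [Finset.sum_mul]
      rw [← Finset.sum_add_distrib]
      congr 1; ext j; ring
    rw [this]
    ring

lemma core (n m : ℕ) (B K : ℕ → ℝ) (hmn : 2*m + 2 ≤ n) (hnE : n % 2 = 0) :
    ∑ i ∈ Finset.range n, ∑ j ∈ Finset.range n,
      (if i < j then
        (((if i < 2*m then B i else 0) + Vv B (2*m) * epsR m i) * (B j + K j)
         - ((if j < 2*m then B j else 0) + Vv B (2*m) * epsR m j) * (B i + K i))
       else 0)
    = ∑ j ∈ Finset.range (2*m), K j * (Vv B (j+1) + Vv B j - Vv B (2*m)) := by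
  set v := Vv B (2*m) with hv
  set P : ℕ → ℝ := fun i => (if i < 2*m then B i else 0) + v * epsR m i with hP
  set Q : ℕ → ℝ := fun i => B i + K i with hQ
  rw [Finset.sum_comm]
  have hσP : ∀ j ≤ n, ∑ i ∈ Finset.range j, P i
      = Vv B (min j (2*m)) + v * (if 2*m ≤ j ∧ j % 2 = 1 then (-1:ℝ) else 0) := by
    intro j hj
    rw [hP]
    rw [Finset.sum_add_distrib, ← Finset.mul_sum, eps_sum]
    congr 1
    rcases Nat.le_total j (2*m) with h | h
    · rw [Nat.min_eq_left h]
      have : ∀ i ∈ Finset.range j, (if i < 2*m then B i else 0) = B i := by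
        intro i hi; rw [if_pos]; exact lt_of_lt_of_le (Finset.mem_range.mp hi) h
      rw [Finset.sum_congr rfl this]; rfl
    · rw [Nat.min_eq_right h, Vv]
      exact sum_ite_lt j (2*m) h B
  have hσQ : ∀ j, ∑ i ∈ Finset.range j, Q i = Vv B j + ∑ i ∈ Finset.range j, K i := by
    intro j; rw [hQ, Finset.sum_add_distrib]; rfl
  have hinner : ∀ j ∈ Finset.range n,
      (∑ i ∈ Finset.range n, if i < j then P i * Q j - P j * Q i else 0)
      = Q j * (∑ i ∈ Finset.range j, P i) - P j * (∑ i ∈ Finset.range j, Q i) := by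
    intro j hj
    rw [sum_ite_lt n j (le_of_lt (Finset.mem_range.mp hj))]
    rw [Finset.sum_sub_distrib, ← Finset.sum_mul, ← Finset.mul_sum]
    ring
  rw [Finset.sum_congr rfl hinner]
  have hsplit : Finset.range n = Finset.range (2*m) ∪ Finset.Ico (2*m) n := by
    rw [Finset.range_eq_Ico, Finset.range_eq_Ico]
    exact (Finset.Ico_union_Ico_eq_Ico (Nat.zero_le (2*m)) (by omega : 2*m ≤ n)).symm
  have hdisj : Disjoint (Finset.range (2*m)) (Finset.Ico (2*m) n) := by
    rw [Finset.disjoint_left]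
    intro j hj hj2
    rw [Finset.mem_range] at hj
    rw [Finset.mem_Ico] at hj2
    omega
  rw [hsplit, Finset.sum_union hdisj]
  set Kc : ℕ → ℝ := fun j => ∑ i ∈ Finset.range j, K i with hKc
  have hterm : ∀ j ≤ n, Q j * (∑ i ∈ Finset.range j, P i) - P j * (∑ i ∈ Finset.range j, Q i)
      = Q j * (Vv B (min j (2*m)) + v * (if 2*m ≤ j ∧ j % 2 = 1 then (-1:ℝ) else 0))
        - P j * (Vv B j + Kc j) := by
    intro j hj
    rw [hσP j hj, hσQ j]
  have hIco : ∑ j ∈ Finset.Ico (2*m) n,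
      (Q j * (∑ i ∈ Finset.range j, P i) - P j * (∑ i ∈ Finset.range j, Q i)) = 0 := by
    have h1 : ∀ j ∈ Finset.Ico (2*m) n,
        (Q j * (∑ i ∈ Finset.range j, P i) - P j * (∑ i ∈ Finset.range j, Q i))
        = Q j * (Vv B (min j (2*m)) + v * (if 2*m ≤ j ∧ j % 2 = 1 then (-1:ℝ) else 0))
          - P j * (Vv B j + Kc j) := by
      intro j hj
      exact hterm j (le_of_lt (Finset.mem_Ico.mp hj).2)
    rw [Finset.sum_congr rfl h1]
    set g : ℕ → ℝ := fun j =>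
      if 2*m ≤ j then
        Q j * (Vv B (min j (2*m)) + v * (if 2*m ≤ j ∧ j % 2 = 1 then (-1:ℝ) else 0))
          - P j * (Vv B j + Kc j)
      else 0 with hg
    have h2 : ∑ j ∈ Finset.Ico (2*m) n,
        (Q j * (Vv B (min j (2*m)) + v * (if 2*m ≤ j ∧ j % 2 = 1 then (-1:ℝ) else 0))
          - P j * (Vv B j + Kc j)) = ∑ j ∈ Finset.range n, g j := by
      rw [hg, ← Finset.sum_filter]
      congr 1
      ext j
      simp only [Finset.mem_filter, Finset.mem_range, Finset.mem_Ico]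
      omega
    rw [h2]
    obtain ⟨q, hq⟩ : ∃ q, n = 2*q := ⟨n/2, by omega⟩
    rw [hq]
    apply cancel_pairs
    intro i
    simp only [hg, hP, hQ]
    rcases Nat.lt_or_ge (2*i) (2*m) with h | h
    · rw [if_neg (by omega), if_neg (by omega)]
      ring
    · rw [if_pos (by omega : 2*m ≤ 2*i), if_pos (by omega : 2*m ≤ 2*i+1)]
      have e1 : epsR m (2*i) = -1 := by rw [epsR, if_pos (by omega), if_neg (by omega)]
      have e2 : epsR m (2*i+1) = 1 := by rw [epsR, if_pos (by omega), if_pos (by omega)]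
      have m1 : min (2*i) (2*m) = 2*m := by omega
      have m2 : min (2*i+1) (2*m) = 2*m := by omega
      rw [m1, m2, e1, e2, if_neg (by omega : ¬ (2*m ≤ 2*i ∧ 2*i % 2 = 1)),
        if_pos (by omega : 2*m ≤ 2*i+1 ∧ (2*i+1) % 2 = 1)]
      rw [if_neg (by omega : ¬ 2*i < 2*m), if_neg (by omega : ¬ 2*i+1 < 2*m)]
      have w1 : Vv B (2*i+1) = Vv B (2*i) + B (2*i) := Finset.sum_range_succ B (2*i)
      have w2 : Kc (2*i+1) = Kc (2*i) + K (2*i) := Finset.sum_range_succ K (2*i)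
      rw [w1, w2]
      ring
  rw [hIco, add_zero]
  have h3 : ∀ j ∈ Finset.range (2*m),
      (Q j * (∑ i ∈ Finset.range j, P i) - P j * (∑ i ∈ Finset.range j, Q i))
      = K j * Vv B j - B j * Kc j := by
    intro j hj
    rw [Finset.mem_range] at hj
    rw [hterm j (by omega)]
    have e0 : epsR m j = 0 := by rw [epsR, if_neg (by omega)]
    have m0 : min j (2*m) = j := by omega
    simp only [hP, hQ]
    rw [m0, e0, if_neg (by omega : ¬ (2*m ≤ j ∧ j % 2 = 1)),
      if_pos (by omega : j < 2*m)]
    ring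
  rw [Finset.sum_congr rfl h3, Finset.sum_sub_distrib]
  have h4 : ∑ j ∈ Finset.range (2*m), B j * Kc j
      = ∑ j ∈ Finset.range (2*m), K j * (v - Vv B (j+1)) := abel (2*m) B K
  rw [h4, ← Finset.sum_sub_distrib]
  congr 1
  ext j
  ring

/-! ### Partial derivative computations -/

lemma pd_mul {n : ℕ} {f g : (Fin n → ℝ) → ℝ} {x : Fin n → ℝ}
    (hf : DifferentiableAt ℝ f x) (hg : DifferentiableAt ℝ g x) (i : Fin n) :
    pd (fun y => f y * g y) x i = f x * pd g x i + g x * pd f x i := by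
  rw [pd, fderiv_fun_mul hf hg]
  simp [pd]

lemma pd_inv {n : ℕ} {g : (Fin n → ℝ) → ℝ} {x : Fin n → ℝ}
    (hg : DifferentiableAt ℝ g x) (h0 : g x ≠ 0) (i : Fin n) :
    pd (fun y => (g y)⁻¹) x i = -pd g x i / (g x)^2 := by
  have h := (hasDerivAt_inv h0).comp_hasFDerivAt x hg.hasFDerivAt
  rw [Function.comp_def] at h
  rw [pd, h.fderiv]
  simp [pd]
  ring

lemma pd_prod {n : ℕ} (S : Finset (Fin n)) (x : Fin n → ℝ) (i : Fin n) :
    pd (fun y => ∏ j ∈ S, y j) x i = if i ∈ S then ∏ j ∈ S.erase i, x j else 0 := by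
  have h := hasFDerivAt_finset_prod (𝕜 := ℝ) (u := S) (x := x)
  rw [pd, h.fderiv]
  simp only [ContinuousLinearMap.coe_sum', Finset.sum_apply, ContinuousLinearMap.coe_smul',
    Pi.smul_apply, ContinuousLinearMap.proj_apply, Pi.single_apply, smul_eq_mul]
  rw [Finset.sum_congr rfl (fun j _ => by rw [mul_ite, mul_one, mul_zero])]
  rw [Finset.sum_ite_eq' S i (fun j => ∏ l ∈ S.erase j, x l)]

lemma diff_prod {n : ℕ} (S : Finset (Fin n)) (x : Fin n → ℝ) :
    DifferentiableAt ℝ (fun y : Fin n → ℝ => ∏ j ∈ S, y j) x :=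
  (hasFDerivAt_finset_prod (𝕜 := ℝ) (u := S) (x := x)).differentiableAt

lemma diff_vfun {n : ℕ} (a : Fin n → ℝ) (r : ℕ) (x : Fin n → ℝ) :
    DifferentiableAt ℝ (vfun a r) x := by
  unfold vfun
  apply DifferentiableAt.fun_sum
  intro j _
  exact ((hasFDerivAt_apply j x).const_mul (a j)).differentiableAt

lemma pd_vfun {n : ℕ} (a : Fin n → ℝ) (r : ℕ) (x : Fin n → ℝ) (i : Fin n) :
    pd (vfun a r) x i = if i.val < r then a i else 0 := by
  have h : HasFDerivAt (vfun a r)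
      (∑ j ∈ Finset.univ.filter (fun j : Fin n => j.val < r),
        (a j) • ContinuousLinearMap.proj (R := ℝ) (φ := fun _ : Fin n => ℝ) j) x :=
    HasFDerivAt.fun_sum (fun j _ => (hasFDerivAt_apply j x).const_mul (a j))
  rw [pd, h.fderiv]
  simp only [ContinuousLinearMap.coe_sum', Finset.sum_apply, ContinuousLinearMap.coe_smul',
    Pi.smul_apply, ContinuousLinearMap.proj_apply, Pi.single_apply, smul_eq_mul]
  rw [Finset.sum_congr rfl (fun j _ => by rw [mul_ite, mul_one, mul_zero]),
    Finset.sum_ite_eq' _ i (fun j => a j)]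
  simp [Finset.mem_filter]

lemma diff_Hfun {n : ℕ} (a k : Fin n → ℝ) (x : Fin n → ℝ) (hx : ∀ i, 0 < x i) :
    DifferentiableAt ℝ (Hfun a k) x := by
  unfold Hfun
  apply DifferentiableAt.fun_sum
  intro j _
  exact (((hasFDerivAt_apply j x).const_mul (a j)).add
    (((hasFDerivAt_apply j x).log (hx j).ne').const_mul (k j))).differentiableAt

lemma pd_Hfun {n : ℕ} (a k : Fin n → ℝ) (x : Fin n → ℝ) (hx : ∀ i, 0 < x i) (i : Fin n) :
    pd (Hfun a k) x i = a i + k i / x i := by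
  have h : HasFDerivAt (Hfun a k)
      (∑ j : Fin n, ((a j) • ContinuousLinearMap.proj (R := ℝ) (φ := fun _ : Fin n => ℝ) j
        + (k j) • ((x j)⁻¹ • ContinuousLinearMap.proj (R := ℝ) (φ := fun _ : Fin n => ℝ) j))) x :=
    HasFDerivAt.fun_sum (fun j _ => ((hasFDerivAt_apply j x).const_mul (a j)).add
      (((hasFDerivAt_apply j x).log (hx j).ne').const_mul (k j)))
  rw [pd, h.fderiv]
  simp only [ContinuousLinearMap.coe_sum', Finset.sum_apply, ContinuousLinearMap.add_apply,
    ContinuousLinearMap.coe_smul', Pi.smul_apply, ContinuousLinearMap.proj_apply,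
    Pi.single_apply, smul_eq_mul]
  rw [Finset.sum_eq_single i]
  · simp [div_eq_mul_inv]
  · intro b hb hne
    simp [hne]
  · simp

lemma Ifun_eq {n : ℕ} (m : ℕ) : Ifun (n := n) m = fun y =>
    (∏ j ∈ Finset.univ.filter (fun i : Fin n => 2*m ≤ i.val ∧ Odd i.val), y j) *
    ((∏ j ∈ Finset.univ.filter (fun i : Fin n => 2*m ≤ i.val ∧ Even i.val), y j))⁻¹ := by
  funext y
  rw [Ifun, div_eq_mul_inv]

lemma diff_Ifun {n : ℕ} (m : ℕ) (x : Fin n → ℝ) (hx : ∀ i, 0 < x i) :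
    DifferentiableAt ℝ (Ifun (n := n) m) x := by
  rw [Ifun_eq]
  exact (diff_prod _ x).mul ((diff_prod _ x).inv
    (Finset.prod_ne_zero_iff.mpr fun j _ => (hx j).ne'))

lemma pd_Ifun {n : ℕ} (m : ℕ) (x : Fin n → ℝ) (hx : ∀ i, 0 < x i) (i : Fin n) :
    pd (Ifun m) x i = Ifun m x * epsR m i.val / x i := by
  set S1 := Finset.univ.filter (fun i : Fin n => 2*m ≤ i.val ∧ Odd i.val) with hS1
  set S2 := Finset.univ.filter (fun i : Fin n => 2*m ≤ i.val ∧ Even i.val) with hS2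
  have h2 : (∏ j ∈ S2, x j) ≠ 0 := Finset.prod_ne_zero_iff.mpr fun j _ => (hx j).ne'
  have hxi : x i ≠ 0 := (hx i).ne'
  rw [Ifun_eq]
  rw [pd_mul (diff_prod S1 x) ((diff_prod S2 x).fun_inv h2) i,
    pd_inv (diff_prod S2 x) h2 i, pd_prod, pd_prod]
  beta_reduce
  rw [← hS1, ← hS2]
  by_cases h1 : i ∈ S1
  · have hodd : i.val % 2 = 1 := Nat.odd_iff.mp (Finset.mem_filter.mp h1).2.2
    have hge : 2*m ≤ i.val := (Finset.mem_filter.mp h1).2.1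
    have hn2 : i ∉ S2 := by
      rw [hS2]
      simp only [Finset.mem_filter, Finset.mem_univ, true_and, not_and]
      intro _
      rw [Nat.even_iff]
      omega
    rw [if_pos h1, if_neg hn2, epsR, if_pos hge, if_pos hodd]
    have he : (∏ j ∈ S1.erase i, x j) * x i = ∏ j ∈ S1, x j := Finset.prod_erase_mul S1 x h1
    rw [← he]
    field_simp
    ring
  · by_cases h2m : i ∈ S2
    · have heven : i.val % 2 = 0 := Nat.even_iff.mp (Finset.mem_filter.mp h2m).2.2
      have hge : 2*m ≤ i.val := (Finset.mem_filter.mp h2m).2.1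
      rw [if_neg h1, if_pos h2m, epsR, if_pos hge, if_neg (by omega)]
      have he : (∏ j ∈ S2.erase i, x j) * x i = ∏ j ∈ S2, x j := Finset.prod_erase_mul S2 x h2m
      have hne : (∏ j ∈ S2.erase i, x j) ≠ 0 :=
        Finset.prod_ne_zero_iff.mpr fun j _ => (hx j).ne'
      rw [← he]
      field_simp
      ring
    · have he0 : epsR m i.val = 0 := by
        rw [epsR]
        by_cases hge : 2*m ≤ i.val
        · exfalso
          rcases Nat.even_or_odd i.val with he | ho
          · exact h2m (by rw [hS2]; simp [hge, he])
          · exact h1 (by rw [hS1]; simp [hge, ho])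
        · rw [if_neg hge]
      rw [if_neg h1, if_neg h2m, he0]
      simp

lemma pd_Ffun {n : ℕ} (a : Fin n → ℝ) (m : ℕ) (x : Fin n → ℝ) (hx : ∀ i, 0 < x i) (i : Fin n) :
    pd (Ffun a m) x i = vfun a (2*m) x * (Ifun m x * epsR m i.val / x i)
      + Ifun m x * (if i.val < 2*m then a i else 0) := by
  have h : Ffun a m = fun y => vfun a (2*m) y * Ifun m y := rfl
  rw [h, pd_mul (diff_vfun a (2*m) x) (diff_Ifun m x hx) i, pd_Ifun m x hx i, pd_vfun]

/-! ### Main theorem -/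

/-- Lemma 4.1 of the paper: for even `n = 2N` and `1 ≤ m ≤ N − 1`,
`{F_m, H} = I_m Σ_{j=1}^{2m} k_j (v_j + v_{j−1} − v_{2m})`. -/
theorem stmt_7 (N : ℕ) (a k : Fin (2*N) → ℝ) (m : ℕ) (hm1 : 1 ≤ m) (hm2 : m + 1 ≤ N)
    (x : Fin (2*N) → ℝ) (hx : ∀ i, 0 < x i) :
    pb (Ffun a m) (Hfun a k) x
      = Ifun m x * ∑ j ∈ Finset.univ.filter (fun j : Fin (2*N) => j.val < 2*m),
          k j * (vfun a (j.val+1) x + vfun a j.val x - vfun a (2*m) x) := by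
  have h2m : 2*m + 2 ≤ 2*N := by omega
  set B : ℕ → ℝ := fun t => if h : t < 2*N then a ⟨t, h⟩ * x ⟨t, h⟩ else 0 with hB
  set K : ℕ → ℝ := fun t => if h : t < 2*N then k ⟨t, h⟩ else 0 with hK
  have hBv : ∀ i : Fin (2*N), B i.val = a i * x i := by
    intro i; rw [hB]; simp [i.isLt]
  have hKv : ∀ i : Fin (2*N), K i.val = k i := by
    intro i; rw [hK]; simp [i.isLt]
  have hvfun : ∀ r, r ≤ 2*N → vfun a r x = Vv B r := by
    intro r hr
    rw [vfun, Finset.sum_filter]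
    have : ∀ j : Fin (2*N), (if j.val < r then a j * x j else 0)
        = (fun t => if t < r then B t else 0) j.val := by
      intro j
      by_cases h : j.val < r
      · simp only [if_pos h, hBv j]
      · simp only [if_neg h]
    rw [Finset.sum_congr rfl (fun j _ => this j),
      Fin.sum_univ_eq_sum_range (fun t => if t < r then B t else 0) (2*N),
      sum_ite_lt (2*N) r hr B]
    rfl
  have hv2m : vfun a (2*m) x = Vv B (2*m) := hvfun (2*m) (by omega)
  -- key pointwise identities
  have key1 : ∀ i : Fin (2*N), x i * pd (Ffun a m) x i
      = Ifun m x * ((if i.val < 2*m then B i.val else 0) + Vv B (2*m) * epsR m i.val) := by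
    intro i
    rw [pd_Ffun a m x hx i, hv2m, hBv i]
    have hxi : x i ≠ 0 := (hx i).ne'
    by_cases h : i.val < 2*m
    · rw [if_pos h, if_pos h]
      field_simp
      ring
    · rw [if_neg h, if_neg h]
      field_simp
      ring
  have key2 : ∀ j : Fin (2*N), x j * pd (Hfun a k) x j = B j.val + K j.val := by
    intro j
    rw [pd_Hfun a k x hx j, hBv j, hKv j]
    have hxj : x j ≠ 0 := (hx j).ne'
    field_simp
  have hterm : ∀ i j : Fin (2*N),
      (if i < j then x i * x j * (pd (Ffun a m) x i * pd (Hfun a k) x j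
          - pd (Ffun a m) x j * pd (Hfun a k) x i) else 0)
      = Ifun m x * (if (i:ℕ) < (j:ℕ) then
          (((if (i:ℕ) < 2*m then B i else 0) + Vv B (2*m) * epsR m i) * (B j + K j)
           - ((if (j:ℕ) < 2*m then B j else 0) + Vv B (2*m) * epsR m j) * (B i + K i))
         else 0) := by
    intro i j
    by_cases hij : i < j
    · rw [if_pos hij, if_pos (Fin.lt_def.mp hij)]
      have e1 : x i * x j * (pd (Ffun a m) x i * pd (Hfun a k) x j
          - pd (Ffun a m) x j * pd (Hfun a k) x i)
          = (x i * pd (Ffun a m) x i) * (x j * pd (Hfun a k) x j)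
            - (x j * pd (Ffun a m) x j) * (x i * pd (Hfun a k) x i) := by ring
      rw [e1, key1 i, key2 j, key1 j, key2 i]
      ring
    · rw [if_neg hij, if_neg (fun h => hij (Fin.lt_def.mpr h)), mul_zero]
  rw [pb]
  have step1 : ∑ i : Fin (2*N), ∑ j : Fin (2*N),
      (if i < j then x i * x j * (pd (Ffun a m) x i * pd (Hfun a k) x j
          - pd (Ffun a m) x j * pd (Hfun a k) x i) else 0)
      = Ifun m x * ∑ i : Fin (2*N), ∑ j : Fin (2*N),
        (if (i:ℕ) < (j:ℕ) then
          (((if (i:ℕ) < 2*m then B i else 0) + Vv B (2*m) * epsR m i) * (B j + K j)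
           - ((if (j:ℕ) < 2*m then B j else 0) + Vv B (2*m) * epsR m j) * (B i + K i))
         else 0) := by
    rw [Finset.mul_sum]
    apply Finset.sum_congr rfl
    intro i _
    rw [Finset.mul_sum]
    apply Finset.sum_congr rfl
    intro j _
    exact hterm i j
  rw [step1]
  -- convert Fin sums to range sums
  have step2 : ∑ i : Fin (2*N), ∑ j : Fin (2*N),
      (if (i:ℕ) < (j:ℕ) then
        (((if (i:ℕ) < 2*m then B i else 0) + Vv B (2*m) * epsR m i) * (B j + K j)
         - ((if (j:ℕ) < 2*m then B j else 0) + Vv B (2*m) * epsR m j) * (B i + K i))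
       else 0)
      = ∑ i ∈ Finset.range (2*N), ∑ j ∈ Finset.range (2*N),
        (if i < j then
          (((if i < 2*m then B i else 0) + Vv B (2*m) * epsR m i) * (B j + K j)
           - ((if j < 2*m then B j else 0) + Vv B (2*m) * epsR m j) * (B i + K i))
         else 0) := by
    rw [← Fin.sum_univ_eq_sum_range (fun ti => ∑ j ∈ Finset.range (2*N),
      (if ti < j then
        (((if ti < 2*m then B ti else 0) + Vv B (2*m) * epsR m ti) * (B j + K j)
         - ((if j < 2*m then B j else 0) + Vv B (2*m) * epsR m j) * (B ti + K ti))
       else 0)) (2*N)]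
    apply Finset.sum_congr rfl
    intro i _
    exact Fin.sum_univ_eq_sum_range (fun tj =>
      (if (i:ℕ) < tj then
        (((if (i:ℕ) < 2*m then B i else 0) + Vv B (2*m) * epsR m i) * (B tj + K tj)
         - ((if tj < 2*m then B tj else 0) + Vv B (2*m) * epsR m tj) * (B i + K i))
       else 0)) (2*N)
  rw [step2, core (2*N) m B K h2m (by omega)]
  -- convert RHS
  congr 1
  rw [Finset.sum_filter]
  have : ∀ j : Fin (2*N), (if j.val < 2*m then
        k j * (vfun a (j.val+1) x + vfun a j.val x - vfun a (2*m) x) else 0)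
      = (fun t => if t < 2*m then K t * (Vv B (t+1) + Vv B t - Vv B (2*m)) else 0) j.val := by
    intro j
    by_cases h : j.val < 2*m
    · simp only [if_pos h]
      rw [hKv j, hvfun (j.val+1) (by omega), hvfun j.val (by omega), hv2m]
    · simp only [if_neg h]
  rw [Finset.sum_congr rfl (fun j _ => this j),
    Fin.sum_univ_eq_sum_range (fun t => if t < 2*m then K t * (Vv B (t+1) + Vv B t - Vv B (2*m)) else 0) (2*N),
    sum_ite_lt (2*N) (2*m) (by omega) (fun t => K t * (Vv B (t+1) + Vv B t - Vv B (2*m)))]
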